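/- Suppose firm Y draws its threshold from a continuous cdf F on [0,1] with Λ(θ) = ∫₀^θ F(t) dt and failure probability q = E[Θ] = 1 - Λ(1). If firm X chooses a deterministic threshold θ, its probability of being selected equals (1-θ)·q + ((1-θ)² + θ²)·F(θ) + (1 - 2θ)·Λ(θ). -/

import Mathlib

open MeasureTheory Set

/-- Outcome of the selection rule for firm `X` with threshold `θ` and quality `x`
against firm `Y` with threshold `t` and quality `y`: `1` if `X` is selected, `0` if
`Y` is selected, `1/2` on an exact coin-flip tie. A firm passes iff its quality is at
least its threshold; a passing firm beats a failing firm; on equal outcomes the firm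
with the higher threshold wins; exact threshold ties are broken by fair coin. -/
noncomputable def sel (θ x t y : ℝ) : ℝ :=
  if θ ≤ x ∧ y < t then 1
  else if x < θ ∧ t ≤ y then 0
  else if t < θ then 1
  else if θ < t then 0
  else 1/2

/-- Probability that a firm with deterministic threshold `θ` is selected against a
firm with threshold `t`, over i.i.d. uniform `[0,1]` qualities. -/
noncomputable def win (θ t : ℝ) : ℝ := ∫ x in (0:ℝ)..1, ∫ y in (0:ℝ)..1, sel θ x t y

lemma int01_ite (a b c : ℝ) (h0 : 0 ≤ c) (h1 : c ≤ 1) :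
    (∫ y in (0:ℝ)..1, (if y < c then a else b)) = c * a + (1 - c) * b := by
  have hae : ∀ᵐ y : ℝ, y ∈ Set.uIoc (0:ℝ) 1 → (if y < c then a else b)
      = ({x : ℝ | x ≤ c}.indicator (fun _ => a - b) y) + b := by
    have hc : (volume : Measure ℝ) {c} = 0 := measure_singleton c
    filter_upwards [(ae_iff.mpr (by simpa using hc) : ∀ᵐ y : ℝ, y ≠ c)] with y hy _
    by_cases h : y < c
    · rw [if_pos h, indicator_of_mem (by exact h.le) (fun _ => a - b)]; ring
    · rw [if_neg h, indicator_of_notMem (by exact fun hc' => hy (le_antisymm hc' (not_lt.mp h)) : y ∉ {x : ℝ | x ≤ c})]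
      ring
  rw [intervalIntegral.integral_congr_ae hae]
  have hint : IntervalIntegrable ({x : ℝ | x ≤ c}.indicator (fun _ => a - b)) volume 0 1 := by
    rw [intervalIntegrable_iff]
    exact (Integrable.indicator (integrableOn_const measure_Ioc_lt_top.ne) measurableSet_Iic)
  rw [intervalIntegral.integral_add hint intervalIntegrable_const,
    intervalIntegral.integral_indicator ⟨h0, h1⟩]
  simp
  ring

lemma win_eq_lt {θ t : ℝ} (hθ : θ ∈ Icc (0:ℝ) 1) (ht : t ∈ Icc (0:ℝ) 1) (h : t < θ) :
    win θ t = (1 - θ) + θ * t := by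
  have hin : ∀ x : ℝ, (∫ y in (0:ℝ)..1, sel θ x t y) = if x < θ then t else 1 := by
    intro x
    by_cases hx : x < θ
    · rw [if_pos hx]
      have hsel : ∀ y, sel θ x t y = if y < t then (1:ℝ) else 0 := by
        intro y
        have h1 : ¬(θ ≤ x ∧ y < t) := fun hc => absurd hc.1 (not_le.mpr hx)
        by_cases hy : y < t
        · have h2 : ¬(x < θ ∧ t ≤ y) := fun hc => absurd hc.2 (not_le.mpr hy)
          simp only [sel]; rw [if_neg h1, if_neg h2, if_pos h, if_pos hy]
        · have h2 : (x < θ ∧ t ≤ y) := ⟨hx, not_lt.mp hy⟩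
          simp only [sel]; rw [if_neg h1, if_pos h2, if_neg hy]
      simp only [hsel]
      rw [int01_ite 1 0 t ht.1 ht.2]; ring
    · rw [if_neg hx]
      have hsel : ∀ y, sel θ x t y = 1 := by
        intro y
        have h2 : ¬(x < θ ∧ t ≤ y) := fun hc => absurd hc.1 hx
        by_cases hy : y < t
        · simp only [sel]; rw [if_pos ⟨not_lt.mp hx, hy⟩]
        · simp only [sel]; rw [if_neg (fun hc => absurd hc.2 hy), if_neg h2, if_pos h]
      simp only [hsel]
      simp
  unfold win
  simp only [hin]
  rw [int01_ite t 1 θ hθ.1 hθ.2]; ring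

lemma win_eq_gt {θ t : ℝ} (hθ : θ ∈ Icc (0:ℝ) 1) (ht : t ∈ Icc (0:ℝ) 1) (h : θ < t) :
    win θ t = (1 - θ) * t := by
  have hin : ∀ x : ℝ, (∫ y in (0:ℝ)..1, sel θ x t y) = if x < θ then 0 else t := by
    intro x
    by_cases hx : x < θ
    · rw [if_pos hx]
      have hsel : ∀ y, sel θ x t y = 0 := by
        intro y
        have h1 : ¬(θ ≤ x ∧ y < t) := fun hc => absurd hc.1 (not_le.mpr hx)
        by_cases hy : t ≤ y
        · simp only [sel]; rw [if_neg h1, if_pos ⟨hx, hy⟩]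
        · simp only [sel]
          rw [if_neg h1, if_neg (fun hc => absurd hc.2 hy), if_neg (asymm h), if_pos h]
      simp only [hsel]
      simp
    · rw [if_neg hx]
      have hsel : ∀ y, sel θ x t y = if y < t then (1:ℝ) else 0 := by
        intro y
        have h2 : ¬(x < θ ∧ t ≤ y) := fun hc => absurd hc.1 hx
        by_cases hy : y < t
        · simp only [sel]; rw [if_pos ⟨not_lt.mp hx, hy⟩, if_pos hy]
        · simp only [sel]
          rw [if_neg (fun hc => absurd hc.2 hy), if_neg h2, if_neg (asymm h), if_pos h, if_neg hy]
      simp only [hsel]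
      rw [int01_ite 1 0 t ht.1 ht.2]; ring
  unfold win
  simp only [hin]
  rw [int01_ite 0 t θ hθ.1 hθ.2]; ring

open Filter Topology

/-- If firm `Y` draws its threshold from a continuous cdf `F` on `[0,1]` with
`Λ(θ) = ∫₀^θ F` and failure probability `q = 1 - Λ(1)`, then firm `X` choosing the
deterministic threshold `θ ∈ [0,1]` is selected with probability
`(1-θ)·q + ((1-θ)² + θ²)·F(θ) + (1-2θ)·Λ(θ)`. -/
theorem stmt_14 (ν : Measure ℝ) [IsProbabilityMeasure ν] (hsupp : ν (Icc (0:ℝ) 1) = 1)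
    (F : ℝ → ℝ) (hF : ∀ x, F x = (ν (Iic x)).toReal) (hcont : Continuous F)
    (θ : ℝ) (hθ : θ ∈ Icc (0:ℝ) 1) :
    (∫ t, win θ t ∂ν)
      = (1 - θ) * (1 - ∫ t in (0:ℝ)..1, F t)
        + ((1-θ)^2 + θ^2) * F θ
        + (1 - 2*θ) * (∫ t in (0:ℝ)..θ, F t) := by
  -- basic measure facts
  have hcompl : ν (Icc (0:ℝ) 1)ᶜ = 0 := by
    rw [measure_compl measurableSet_Icc (measure_ne_top ν _), hsupp, measure_univ, tsub_self]
  have hae : ∀ᵐ t ∂ν, t ∈ Icc (0:ℝ) 1 := by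
    rw [ae_iff]; simpa [Set.compl_def] using hcompl
  have hIoc : ∀ s u : ℝ, s ≤ u → (ν (Ioc s u)).toReal = F u - F s := by
    intro s u hsu
    have hdisj : Disjoint (Iic s) (Ioc s u) := by
      apply disjoint_left.mpr; intro a ha hb; exact absurd hb.1 (not_lt.mpr ha)
    have hm := measure_union (μ := ν) hdisj measurableSet_Ioc
    rw [Iic_union_Ioc_eq_Iic hsu] at hm
    have := congrArg ENNReal.toReal hm
    rw [ENNReal.toReal_add (measure_ne_top ν _) (measure_ne_top ν _)] at this
    rw [hF u, hF s, this]; ring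
  have hatom : ∀ c : ℝ, ν {c} = 0 := by
    intro c
    have key : (ν {c}).toReal ≤ 0 := by
      have hb : ∀ s ∈ Iio c, (ν {c}).toReal ≤ F c - F s := by
        intro s hs
        rw [← hIoc s c (le_of_lt hs)]
        exact ENNReal.toReal_mono (measure_ne_top ν _)
          (measure_mono (singleton_subset_iff.mpr ⟨hs, le_rfl⟩))
      have hlim : Tendsto (fun s => F c - F s) (𝓝[<] c) (𝓝 0) := by
        have : Tendsto (fun s => F c - F s) (𝓝 c) (𝓝 (F c - F c)) :=
          tendsto_const_nhds.sub (hcont.tendsto c)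
        simpa using this.mono_left nhdsWithin_le_nhds
      exact ge_of_tendsto hlim (eventually_nhdsWithin_of_forall hb)
    have h0 : (ν {c}).toReal = 0 := le_antisymm key ENNReal.toReal_nonneg
    exact ((ENNReal.toReal_eq_zero_iff _).mp h0).resolve_right (measure_ne_top ν _)
  have hid_int : Integrable (fun t : ℝ => t) ν := by
    apply Integrable.mono' (integrable_const (1:ℝ)) measurable_id.aestronglyMeasurable
    filter_upwards [hae] with t ht
    rw [Real.norm_eq_abs, abs_le]; simp only [id_eq]; exact ⟨by linarith [ht.1], ht.2⟩
  -- key Stieltjes fact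
  have hkey : ∀ u ∈ Icc (0:ℝ) 1, (∫ t in Iic u, t ∂ν) = u * F u - ∫ s in (0:ℝ)..u, F s := by
    intro u hu
    have hf_int : Integrable ((Iic u).indicator (fun t : ℝ => t)) ν :=
      hid_int.indicator measurableSet_Iic
    have hf_nn : 0 ≤ᵐ[ν] ((Iic u).indicator (fun t : ℝ => t)) := by
      filter_upwards [hae] with t ht
      simp only [Pi.zero_apply, indicator_apply]
      split_ifs
      · exact ht.1
      · exact le_rfl
    have hlc := hf_int.integral_eq_integral_meas_lt hf_nn
    rw [integral_indicator measurableSet_Iic] at hlc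
    rw [hlc]
    have hset : ∀ s ∈ Ioi (0:ℝ),
        (ν {a : ℝ | s < (Iic u).indicator (fun t : ℝ => t) a}).toReal = (ν (Ioc s u)).toReal := by
      intro s hs
      have hspos : (0:ℝ) < s := hs
      congr 2
      ext a
      simp only [mem_setOf_eq, indicator_apply, mem_Iic, mem_Ioc]
      split_ifs with h
      · exact ⟨fun h2 => ⟨h2, h⟩, fun h2 => h2.1⟩
      · constructor
        · intro h2; exact absurd h2 (by linarith)
        · intro h2; exact absurd h2.2 h
    simp only [measureReal_def]
    rw [setIntegral_congr_fun measurableSet_Ioi hset]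
    have hsplit : Ioi (0:ℝ) = Ioc 0 u ∪ Ioi u := (Ioc_union_Ioi_eq_Ioi hu.1).symm
    have hIoc_eq : EqOn (fun s => (ν (Ioc s u)).toReal) (fun s => F u - F s) (Ioc 0 u) :=
      fun s hs => hIoc s u hs.2
    have hzero : EqOn (fun s => (ν (Ioc s u)).toReal) (fun _ => (0:ℝ)) (Ioi u) := by
      intro s hs
      simp only
      rw [Ioc_eq_empty (not_lt.mpr (le_of_lt hs))]
      simp
    have hint1 : IntegrableOn (fun s => (ν (Ioc s u)).toReal) (Ioc 0 u) volume :=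
      (integrableOn_congr_fun hIoc_eq measurableSet_Ioc).mpr
        ((continuous_const.sub hcont).integrableOn_Ioc)
    have hint2 : IntegrableOn (fun s => (ν (Ioc s u)).toReal) (Ioi u) volume :=
      (integrableOn_congr_fun hzero measurableSet_Ioi).mpr (integrableOn_zero)
    rw [hsplit, setIntegral_union (Ioc_disjoint_Ioi le_rfl) measurableSet_Ioi hint1 hint2,
      setIntegral_congr_fun measurableSet_Ioc hIoc_eq,
      setIntegral_congr_fun measurableSet_Ioi hzero]
    simp only [integral_zero, add_zero]
    rw [← intervalIntegral.integral_of_le hu.1,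
      intervalIntegral.integral_sub intervalIntegrable_const (hcont.intervalIntegrable 0 u)]
    simp [mul_comm]
  -- F 1 = 1
  have hF1 : F 1 = 1 := by
    have h1 : ν (Iic (1:ℝ)) = 1 := le_antisymm prob_le_one
      (by rw [← hsupp]; exact measure_mono Icc_subset_Iic_self)
    rw [hF, h1]; simp
  -- full first moment
  have hfull : (∫ t, t ∂ν) = 1 - ∫ s in (0:ℝ)..1, F s := by
    have hcup : ν (Iic (1:ℝ))ᶜ = 0 := by
      apply measure_mono_null _ hcompl
      intro x hx
      simp only [mem_compl_iff, mem_Iic, not_le] at hx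
      simp only [mem_compl_iff, mem_Icc, not_and, not_le]
      intro _; exact hx
    have := integral_add_compl (s := Iic (1:ℝ)) measurableSet_Iic hid_int
    have hz : (∫ x in (Iic (1:ℝ))ᶜ, x ∂ν) = 0 := by
      rw [Measure.restrict_eq_zero.mpr hcup]; exact integral_zero_measure _
    rw [hz, add_zero] at this
    rw [← this, hkey 1 ⟨zero_le_one, le_rfl⟩, hF1]; ring
  -- a.e. rewrite of win
  have haene : ∀ᵐ t ∂ν, t ≠ θ := by
    rw [ae_iff]; simpa using hatom θ
  set g : ℝ → ℝ := fun t => (1-θ)*t + (Iio θ).indicator (fun s => (1-θ)*(1-s)+θ*s) t with hg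
  have hcongr : (fun t => win θ t) =ᵐ[ν] g := by
    filter_upwards [hae, haene] with t ht hne
    rcases hne.lt_or_gt with h | h
    · rw [win_eq_lt hθ ht h]
      simp only [hg, indicator_of_mem (mem_Iio.mpr h)]
      ring
    · rw [win_eq_gt hθ ht h]
      rw [hg]
      simp only [indicator_of_notMem (fun hc => absurd (mem_Iio.mp hc) (not_lt.mpr h.le))]
      ring
  rw [integral_congr_ae hcongr]
  have hind_int : Integrable ((Iio θ).indicator (fun s : ℝ => (1-θ)*(1-s)+θ*s)) ν := by
    apply Integrable.indicator _ measurableSet_Iio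
    apply Integrable.mono' (integrable_const (2:ℝ))
    · exact (Measurable.aestronglyMeasurable (by fun_prop))
    · filter_upwards [hae] with s hs
      rw [Real.norm_eq_abs, abs_le]
      constructor <;> nlinarith [hs.1, hs.2, hθ.1, hθ.2]
  rw [hg]
  rw [integral_add (hid_int.const_mul _) hind_int, integral_const_mul,
    integral_indicator measurableSet_Iio,
    setIntegral_congr_set (Iio_ae_eq_Iic' (hatom θ))]
  have hlin : (∫ t in Iic θ, ((1-θ)*(1-t)+θ*t) ∂ν)
      = (1-θ) * F θ + (2*θ-1) * ∫ t in Iic θ, t ∂ν := by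
    have e1 : ∀ t : ℝ, (1-θ)*(1-t)+θ*t = (1-θ) + (2*θ-1)*t := fun t => by ring
    simp only [e1]
    rw [integral_add (integrable_const _) ((hid_int.restrict).const_mul _),
      setIntegral_const, integral_const_mul, smul_eq_mul, hF θ, measureReal_def]
    ring
  rw [hlin, hkey θ hθ, hfull]
  ring
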